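/- Let K : ℝ → [0,∞) be measurable with ∫_ℝ K(x)dx = 1, K(x) = K(1−x) for all x, and ∫_ℝ (x−1/2)² K(x)dx = 1/20. Let K₂ᵒᵖᵗ(x) = 6x(1−x)·1_{[0,1]}(x). Then ∫_ℝ K(x)² dx ≥ ∫₀¹ (K₂ᵒᵖᵗ(x))² dx = 6/5, with equality (in the a.e. sense) if and only if K = K₂ᵒᵖᵗ almost everywhere. -/

import Mathlib

open MeasureTheory ENNReal

theorem stmt_3 (K : ℝ → ℝ) (hmeas : Measurable K) (hnn : ∀ x, 0 ≤ K x)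
    (hKint : Integrable K) (hK1 : (∫ x : ℝ, K x) = 1)
    (hsym : ∀ x, K x = K (1 - x))
    (hmomInt : Integrable (fun x => (x - 1/2)^2 * K x))
    (hmom : (∫ x : ℝ, (x - 1/2)^2 * K x) = 1/20) :
    let Kopt : ℝ → ℝ := fun x => if x ∈ Set.Icc (0:ℝ) 1 then 6 * x * (1 - x) else 0
    (∫ x in (0:ℝ)..1, (Kopt x)^2) = 6/5 ∧
    (6/5 : ℝ≥0∞) ≤ ∫⁻ x : ℝ, ENNReal.ofReal ((K x)^2) ∧
    ((∫⁻ x : ℝ, ENNReal.ofReal ((K x)^2)) = (6/5 : ℝ≥0∞) ↔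
      K =ᵐ[volume] Kopt) := by
  intro Kopt
  -- basic poly integral
  have pi : ∀ n : ℕ, IntervalIntegrable (fun x : ℝ => x ^ n) volume 0 1 := fun n =>
    intervalIntegral.intervalIntegrable_pow n
  have hpoly : (∫ x in (0:ℝ)..1, (36*x^2 - 72*x^3 + 36*x^4)) = 6/5 := by
    rw [intervalIntegral.integral_add (((pi 2).const_mul 36).sub ((pi 3).const_mul 72))
        ((pi 4).const_mul 36),
      intervalIntegral.integral_sub ((pi 2).const_mul 36) ((pi 3).const_mul 72),
      intervalIntegral.integral_const_mul, intervalIntegral.integral_const_mul,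
      intervalIntegral.integral_const_mul, integral_pow, integral_pow, integral_pow]
    norm_num
  have h1 : (∫ x in (0:ℝ)..1, (Kopt x)^2) = 6/5 := by
    rw [intervalIntegral.integral_congr (g := fun x => 36*x^2 - 72*x^3 + 36*x^4) ?_]
    · exact hpoly
    · intro x hx
      rw [Set.uIcc_of_le (by norm_num : (0:ℝ) ≤ 1)] at hx
      simp only [Kopt, if_pos hx]; ring
  -- Kopt basic facts
  have hKopt_ind : Kopt = Set.indicator (Set.Icc (0:ℝ) 1) (fun x => 6*x*(1-x)) := by
    funext x; simp [Kopt, Set.indicator_apply]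
  have hKopt_nn : ∀ x, 0 ≤ Kopt x := by
    intro x; simp only [Kopt]
    split
    · rename_i h; rcases h with ⟨h0, h1⟩; nlinarith
    · exact le_rfl
  have hKopt2_ind : (fun x => (Kopt x)^2)
      = Set.indicator (Set.Icc (0:ℝ) 1) (fun x => (6*x*(1-x))^2) := by
    funext x
    simp only [Kopt, Set.indicator_apply]
    split <;> simp
  have hKopt2_int : Integrable (fun x => (Kopt x)^2) := by
    rw [hKopt2_ind, integrable_indicator_iff measurableSet_Icc]
    exact Continuous.integrableOn_Icc (by fun_prop)
  have hKopt2_val : (∫ x : ℝ, (Kopt x)^2) = 6/5 := by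
    rw [hKopt2_ind, integral_indicator measurableSet_Icc,
      MeasureTheory.integral_Icc_eq_integral_Ioc,
      ← intervalIntegral.integral_of_le (by norm_num : (0:ℝ) ≤ 1)]
    rw [intervalIntegral.integral_congr (g := fun x => 36*x^2 - 72*x^3 + 36*x^4) ?_]
    · exact hpoly
    · intro x hx; ring
  have hKopt_meas : Measurable Kopt := by
    rw [hKopt_ind]
    exact (by fun_prop : Measurable fun x : ℝ => 6*x*(1-x)).indicator measurableSet_Icc
  have hKopt_bdd : ∀ x, ‖Kopt x‖ ≤ 3/2 := by
    intro x
    rw [Real.norm_eq_abs, abs_of_nonneg (hKopt_nn x)]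
    simp only [Kopt]
    split
    · rename_i h; nlinarith [h.1, h.2, sq_nonneg (x - 1/2)]
    · norm_num
  -- g * K integral
  have hgK_eq : (fun x : ℝ => (3/2 - 6*(x - 1/2)^2) * K x)
      = fun x => (3/2 : ℝ) * K x - 6 * ((x - 1/2)^2 * K x) := by
    funext x; ring
  have hgK_int : Integrable (fun x : ℝ => (3/2 - 6*(x - 1/2)^2) * K x) := by
    rw [hgK_eq]; exact (hKint.const_mul _).sub (hmomInt.const_mul 6)
  have hgK_val : (∫ x : ℝ, (3/2 - 6*(x - 1/2)^2) * K x) = 6/5 := by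
    rw [hgK_eq, integral_sub (hKint.const_mul _) (hmomInt.const_mul 6),
      integral_const_mul, integral_const_mul, hK1, hmom]
    norm_num
  -- g ≤ Kopt
  have hg_le : ∀ x : ℝ, (3/2 - 6*(x - 1/2)^2) ≤ Kopt x := by
    intro x
    simp only [Kopt]
    split
    · exact le_of_eq (by ring)
    · rename_i h
      simp only [Set.mem_Icc, not_and, not_le] at h
      rcases lt_or_ge x 0 with h0 | h0
      · nlinarith
      · have := h h0; nlinarith
  have hKKopt_int : Integrable (fun x => K x * Kopt x) := by
    have := hKint.bdd_mul (hKopt_meas.aestronglyMeasurable) (c := 3/2) (ae_of_all _ hKopt_bdd)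
    exact this.congr (ae_of_all _ fun x => mul_comm _ _)
  have hKKopt_ge : 6/5 ≤ ∫ x : ℝ, K x * Kopt x := by
    rw [← hgK_val]
    refine integral_mono hgK_int hKKopt_int fun x => ?_
    rw [mul_comm]
    exact mul_le_mul_of_nonneg_left (hg_le x) (hnn x)
  have hofreal : ((6:ℝ≥0∞)/5) = ENNReal.ofReal (6/5) := by
    rw [ENNReal.ofReal_div_of_pos (by norm_num)]
    norm_num
  have hmain : Integrable (fun x => (K x)^2) → 6/5 ≤ ∫ x : ℝ, (K x)^2 := by
    intro h2
    have hle : ∀ x, 2*(K x * Kopt x) - (Kopt x)^2 ≤ (K x)^2 := fun x => by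
      nlinarith [sq_nonneg (K x - Kopt x)]
    have hmono : (∫ x : ℝ, (2*(K x * Kopt x) - (Kopt x)^2)) ≤ ∫ x : ℝ, (K x)^2 :=
      integral_mono ((hKKopt_int.const_mul 2).sub hKopt2_int) h2 hle
    rw [integral_sub (hKKopt_int.const_mul 2) hKopt2_int, integral_const_mul,
      hKopt2_val] at hmono
    linarith
  by_cases h2 : Integrable (fun x => (K x)^2)
  · have heq : (∫⁻ x : ℝ, ENNReal.ofReal ((K x)^2)) = ENNReal.ofReal (∫ x : ℝ, (K x)^2) :=
      (ofReal_integral_eq_lintegral_ofReal h2 (ae_of_all _ fun x => sq_nonneg _)).symm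
    refine ⟨h1, ?_, ?_⟩
    · rw [heq, hofreal]
      exact ENNReal.ofReal_le_ofReal (hmain h2)
    · constructor
      · intro hEq
        have hK2val : (∫ x : ℝ, (K x)^2) = 6/5 := by
          rw [heq, hofreal] at hEq
          have h0 : (0:ℝ) ≤ ∫ x : ℝ, (K x)^2 := integral_nonneg fun x => sq_nonneg _
          exact (ENNReal.ofReal_eq_ofReal_iff h0 (by norm_num)).mp hEq
        have hdiff_eq : (fun x => (K x - Kopt x)^2)
            = fun x => (K x)^2 - 2*(K x * Kopt x) + (Kopt x)^2 := by
          funext x; ring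
        have hdiff_int : Integrable (fun x => (K x - Kopt x)^2) := by
          rw [hdiff_eq]
          exact (h2.sub (hKKopt_int.const_mul 2)).add hKopt2_int
        have hzero : (∫ x : ℝ, (K x - Kopt x)^2) = 0 := by
          have hval : (∫ x : ℝ, (K x - Kopt x)^2)
              = (∫ x : ℝ, (K x)^2) - 2*(∫ x : ℝ, K x * Kopt x) + (∫ x : ℝ, (Kopt x)^2) := by
            have ha : Integrable (fun x => (K x)^2 - 2*(K x * Kopt x)) volume :=
              h2.sub (hKKopt_int.const_mul 2)
            rw [hdiff_eq, integral_add ha hKopt2_int,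
              integral_sub h2 (hKKopt_int.const_mul 2), integral_const_mul]
          have hnn0 : 0 ≤ ∫ x : ℝ, (K x - Kopt x)^2 := integral_nonneg fun x => sq_nonneg _
          rw [hval, hK2val, hKopt2_val] at hnn0 ⊢
          linarith
        have hae0 := (integral_eq_zero_iff_of_nonneg (fun x => sq_nonneg (K x - Kopt x))
          hdiff_int).mp hzero
        filter_upwards [hae0] with x hx
        have hx' : (K x - Kopt x)^2 = 0 := hx
        have := (pow_eq_zero_iff two_ne_zero).mp hx'
        linarith [sub_eq_zero.mp this]
      · intro hae
        have hcongr : (∫⁻ x : ℝ, ENNReal.ofReal ((K x)^2))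
            = ∫⁻ x : ℝ, ENNReal.ofReal ((Kopt x)^2) :=
          lintegral_congr_ae (hae.mono fun x hx => by dsimp only; rw [hx])
        rw [hcongr, ← ofReal_integral_eq_lintegral_ofReal hKopt2_int
          (ae_of_all _ fun x => sq_nonneg _), hKopt2_val, hofreal]
  · have htop : (∫⁻ x : ℝ, ENNReal.ofReal ((K x)^2)) = ⊤ := by
      have hmeas2 : AEStronglyMeasurable (fun x => (K x)^2) volume :=
        (hmeas.pow_const 2).aestronglyMeasurable
      have hnotfin : ¬ HasFiniteIntegral (fun x => (K x)^2) volume := fun h => h2 ⟨hmeas2, h⟩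
      rw [HasFiniteIntegral, not_lt, top_le_iff] at hnotfin
      rw [← hnotfin]
      exact lintegral_congr fun x => (Real.enorm_eq_ofReal (sq_nonneg _)).symm
    have hfin : ((6:ℝ≥0∞)/5) ≠ ⊤ := by
      rw [hofreal]; exact ENNReal.ofReal_ne_top
    refine ⟨h1, ?_, ?_⟩
    · rw [htop]; exact le_top
    · constructor
      · intro h; rw [htop] at h; exact absurd h.symm hfin
      · intro hae
        exfalso
        have h' : (fun x => (K x)^2) =ᵐ[volume] fun x => (Kopt x)^2 :=
          hae.mono fun x hx => by dsimp only; rw [hx]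
        exact h2 (hKopt2_int.congr h'.symm)
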